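/- Let X ⊆ ℝ^n and Y ⊆ ℝ^m be nonempty compact convex sets with Y of diameter at most D_y, let p, q be proper closed convex functions with dom p = X, dom q = Y, and let h : ℝ^n×ℝ^m → ℝ be differentiable with L-Lipschitz gradient on X×Y and with h(x,·) concave for each x ∈ X. Let H(x,y) = h(x,y)+p(x)−q(y), H* = inf_{x∈X} sup_{y∈Y} H(x,y), fix ε > 0, ε̂₀ > 0, x̂⁰ ∈ X, ŷ⁰ ∈ Y, set ε̂_k = ε̂₀/(k+1), and define h_k(x,y) = h(x,y) − ε‖y−ŷ⁰‖²/(4D_y) + L‖x−x^k‖². Suppose (x^k, y^k)_{k≥0} ⊆ X×Y with x⁰ = x̂⁰ is such that for every k, (x^{k+1}, y^{k+1}) is an ε̂_k-primal-dual stationary point of min_x max_y {h_k(x,y)+p(x)−q(y)}. Then for every K ≥ 0: min_{0≤k≤K} ‖x^{k+1} − x^k‖² ≤ (sup_{y∈Y} H(x̂⁰,y) − H* + εD_y/4)/(L(K+1)) + 2ε̂₀²(1 + 4D_y²L²ε^{-2})/(L²(K+1)). -/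

import Mathlib

open RealInnerProductSpace Set Finset Filter Topology

section aux

variable {E : Type*} [NormedAddCommGroup E] [InnerProductSpace ℝ E] [CompleteSpace E]

/-- 1-D lower descent lemma. -/
lemma oneDim_lower {f φ : ℝ → ℝ} {C : ℝ}
    (hf : ∀ t ∈ Icc (0:ℝ) 1, HasDerivAt f (φ t) t)
    (hφ : ∀ t ∈ Icc (0:ℝ) 1, φ 0 - C * t ≤ φ t) :
    f 0 + φ 0 - C / 2 ≤ f 1 := by
  set G : ℝ → ℝ := fun t => f t - t * φ 0 + C * t ^ 2 / 2 with hGdef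
  have hG : ∀ t ∈ Icc (0:ℝ) 1, HasDerivAt G (φ t - φ 0 + C * t) t := by
    intro t ht
    have h1 : HasDerivAt (fun t : ℝ => t * φ 0) (φ 0) t := by
      simpa using (hasDerivAt_id t).mul_const (φ 0)
    have h2 : HasDerivAt (fun t : ℝ => C * t ^ 2 / 2) (C * t) t := by
      have h3 : HasDerivAt (fun t : ℝ => C * t ^ 2 / 2) _ t := ((hasDerivAt_pow 2 t).const_mul C).div_const 2
      convert h3 using 1
      push_cast
      ring
    exact ((hf t ht).sub h1).add h2
  have hmono : MonotoneOn G (Icc 0 1) := by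
    apply monotoneOn_of_deriv_nonneg (convex_Icc 0 1)
    · intro t ht
      exact (hG t ht).continuousAt.continuousWithinAt
    · intro t ht
      rw [interior_Icc] at ht
      exact ((hG t (Ioo_subset_Icc_self ht)).differentiableAt).differentiableWithinAt
    · intro t ht
      rw [interior_Icc] at ht
      rw [(hG t (Ioo_subset_Icc_self ht)).deriv]
      have h4 := hφ t (Ioo_subset_Icc_self ht)
      nlinarith [ht.1.le]
  have hend := hmono (left_mem_Icc.mpr zero_le_one) (right_mem_Icc.mpr zero_le_one) zero_le_one
  simp only [hGdef] at hend
  norm_num at hend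
  linarith

/-- Gradient inequality for a concave function. -/
lemma concave_grad_ineq {s : Set E} (hs : Convex ℝ s) {f : E → ℝ} (hf : ConcaveOn ℝ s f)
    {a b : E} (ha : a ∈ s) (hb : b ∈ s) {g : E}
    (hg : HasGradientAt f g a) : f b ≤ f a + ⟪g, b - a⟫ := by
  have hc : HasDerivAt (fun t : ℝ => a + t • (b - a)) (b - a) 0 := by
    simpa using ((hasDerivAt_id (0:ℝ)).smul_const (b - a)).const_add a
  have hF : HasDerivAt (fun t : ℝ => f (a + t • (b - a))) ⟪g, b - a⟫ 0 := by
    have h0 : HasFDerivAt f (InnerProductSpace.toDual ℝ E g) ((fun t : ℝ => a + t • (b - a)) 0) := by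
      simpa using hg.hasFDerivAt
    simpa [InnerProductSpace.toDual_apply_apply, Function.comp_def] using h0.comp_hasDerivAt 0 hc
  have hslope : Tendsto (slope (fun t : ℝ => f (a + t • (b - a))) 0) (𝓝[≠] 0)
      (𝓝 ⟪g, b - a⟫) := hasDerivAt_iff_tendsto_slope.mp hF
  have hmono : 𝓝[>] (0:ℝ) ≤ 𝓝[≠] (0:ℝ) :=
    nhdsWithin_mono 0 (fun t ht => ne_of_gt ht)
  have hev : ∀ᶠ t in 𝓝[>] (0:ℝ),
      f b - f a ≤ slope (fun t : ℝ => f (a + t • (b - a))) 0 t := by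
    filter_upwards [Ioc_mem_nhdsGT_of_mem (show (0:ℝ) ∈ Ico (0:ℝ) 1 by norm_num)] with t ht
    have hcc := hf.2 ha hb (by linarith [ht.2] : (0:ℝ) ≤ 1 - t) ht.1.le (by ring)
    have heq : (1 - t) • a + t • b = a + t • (b - a) := by
      rw [sub_smul, one_smul, smul_sub]; abel
    rw [heq] at hcc
    simp only [smul_eq_mul] at hcc
    have hsl : slope (fun t : ℝ => f (a + t • (b - a))) 0 t
        = (f (a + t • (b - a)) - f a) / t := by
      rw [slope_def_field]
      simp
    rw [hsl, le_div_iff₀ ht.1]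
    nlinarith
  have := ge_of_tendsto (hslope.mono_left hmono) hev
  linarith

/-- Lower quadratic bound from Lipschitz gradient along a segment. -/
lemma descent_lower {s : Set E} (hs : Convex ℝ s) {f : E → ℝ} {g : E → E}
    (hg : ∀ z ∈ s, HasGradientAt f (g z) z) {a b : E} (ha : a ∈ s) (hb : b ∈ s)
    {L : ℝ} (hL : 0 ≤ L) (hlip : ∀ z ∈ s, ‖g z - g a‖ ≤ L * ‖z - a‖) :
    f a + ⟪g a, b - a⟫ - L / 2 * ‖b - a‖ ^ 2 ≤ f b := by
  have hc : ∀ t : ℝ, HasDerivAt (fun t : ℝ => a + t • (b - a)) (b - a) t := fun t => by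
    simpa using ((hasDerivAt_id t).smul_const (b - a)).const_add a
  have hmem : ∀ t ∈ Icc (0:ℝ) 1, a + t • (b - a) ∈ s := fun t ht =>
    hs.add_smul_sub_mem ha hb ht
  have hder : ∀ t ∈ Icc (0:ℝ) 1,
      HasDerivAt (fun t : ℝ => f (a + t • (b - a)))
        ((fun t : ℝ => ⟪g (a + t • (b - a)), b - a⟫) t) t := by
    intro t ht
    have h0 : HasFDerivAt f (InnerProductSpace.toDual ℝ E (g (a + t • (b - a))))
        ((fun u : ℝ => a + u • (b - a)) t) := (hg _ (hmem t ht)).hasFDerivAt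
    simpa [InnerProductSpace.toDual_apply_apply, Function.comp_def] using h0.comp_hasDerivAt t (hc t)
  have hkey : ∀ t ∈ Icc (0:ℝ) 1,
      (fun t : ℝ => ⟪g (a + t • (b - a)), b - a⟫) 0 - (L * ‖b - a‖ ^ 2) * t
        ≤ (fun t : ℝ => ⟪g (a + t • (b - a)), b - a⟫) t := by
    intro t ht
    simp only
    have h0 : (fun u : ℝ => a + u • (b - a)) 0 = a := by simp
    have h1 : ⟪g (a + (0:ℝ) • (b - a)), b - a⟫ - ⟪g (a + t • (b - a)), b - a⟫
        = ⟪g (a + (0:ℝ) • (b - a)) - g (a + t • (b - a)), b - a⟫ :=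
      (inner_sub_left _ _ _).symm
    have h2 : ⟪g (a + (0:ℝ) • (b - a)) - g (a + t • (b - a)), b - a⟫
        ≤ ‖g (a + (0:ℝ) • (b - a)) - g (a + t • (b - a))‖ * ‖b - a‖ := real_inner_le_norm _ _
    have h3 : ‖g (a + (0:ℝ) • (b - a)) - g (a + t • (b - a))‖
        = ‖g (a + t • (b - a)) - g (a + (0:ℝ) • (b - a))‖ := norm_sub_rev _ _
    have h4 : ‖g (a + t • (b - a)) - g a‖ ≤ L * ‖(a + t • (b - a)) - a‖ :=
      hlip _ (hmem t ht)
    have h5 : ‖(a + t • (b - a)) - a‖ = t * ‖b - a‖ := by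
      rw [add_sub_cancel_left, norm_smul]
      simp [abs_of_nonneg ht.1]
    have h6 : (a + (0:ℝ) • (b - a)) = a := by simp
    rw [h6] at h1 h2 h3
    rw [h5] at h4
    rw [h3] at h2
    rw [h6]
    have h7 : ‖g (a + t • (b - a)) - g a‖ * ‖b - a‖ ≤ (L * (t * ‖b - a‖)) * ‖b - a‖ :=
      mul_le_mul_of_nonneg_right h4 (norm_nonneg _)
    have h8 : (L * (t * ‖b - a‖)) * ‖b - a‖ = (L * ‖b - a‖ ^ 2) * t := by ring
    linarith [h1, h2, h7, h8]
  have hmain := oneDim_lower hder hkey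
  have e0 : a + (0:ℝ) • (b - a) = a := by simp
  have e1 : a + (1:ℝ) • (b - a) = b := by simp
  rw [e0, e1] at hmain
  linarith

/-- `∑_{k=0}^{K} 1/(k+1)^2 ≤ 2`. -/
lemma inv_sq_sum_le (K : ℕ) : ∑ k ∈ Finset.range (K+1), (1:ℝ)/((k:ℝ)+1)^2 ≤ 2 := by
  have key : ∀ N : ℕ, ∑ k ∈ Finset.range (N+1), (1:ℝ)/((k:ℝ)+1)^2 ≤ 2 - 1/((N:ℝ)+1) := by
    intro N
    induction N with
    | zero => norm_num
    | succ n ih =>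
      rw [Finset.sum_range_succ]
      have hn : (0:ℝ) < (n:ℝ)+1 := by positivity
      have hn2 : (0:ℝ) < (n:ℝ)+2 := by positivity
      have hstep : (1:ℝ)/(((n:ℕ).succ:ℝ)+1)^2 ≤ 1/((n:ℝ)+1) - 1/((n:ℝ)+2) := by
        push_cast
        rw [div_sub_div _ _ (ne_of_gt hn) (ne_of_gt hn2), div_le_div_iff₀ (by positivity) (by positivity)]
        ring_nf
        nlinarith
      push_cast at hstep ih ⊢
      have e : ((n:ℝ)+1+1) = (n:ℝ)+2 := by ring
      rw [e] at hstep ⊢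
      linarith
  have h2 := key K
  have h3 : (0:ℝ) < 1/((K:ℝ)+1) := by positivity
  linarith

end aux


set_option maxHeartbeats 2000000 in


/-- Successive-iterate bound for the inexact proximal point method
(Algorithm 2) applied to the nonconvex-concave minimax problem
`min_x max_y H(x,y)`, `H(x,y) = h(x,y)+p(x)−q(y)`. -/
theorem successive_iterate_bound {n m : ℕ}
    (X : Set (EuclideanSpace ℝ (Fin n))) (Y : Set (EuclideanSpace ℝ (Fin m)))
    (Dy : ℝ) (hDy : 0 < Dy)
    (hXne : X.Nonempty) (hXcp : IsCompact X) (hXcv : Convex ℝ X)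
    (hYne : Y.Nonempty) (hYcp : IsCompact Y) (hYcv : Convex ℝ Y)
    (hdY : ∀ u ∈ Y, ∀ v ∈ Y, ‖u - v‖ ≤ Dy)
    (p : EuclideanSpace ℝ (Fin n) → ℝ) (q : EuclideanSpace ℝ (Fin m) → ℝ)
    (hpcvx : ConvexOn ℝ X p) (hplsc : LowerSemicontinuousOn p X)
    (hqcvx : ConvexOn ℝ Y q) (hqlsc : LowerSemicontinuousOn q Y)
    (h : EuclideanSpace ℝ (Fin n) → EuclideanSpace ℝ (Fin m) → ℝ)
    (gx : EuclideanSpace ℝ (Fin n) → EuclideanSpace ℝ (Fin m) → EuclideanSpace ℝ (Fin n))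
    (gy : EuclideanSpace ℝ (Fin n) → EuclideanSpace ℝ (Fin m) → EuclideanSpace ℝ (Fin m))
    (L : ℝ) (hL : 0 < L)
    (hgx : ∀ x ∈ X, ∀ y ∈ Y, HasGradientAt (fun x' => h x' y) (gx x y) x)
    (hgy : ∀ x ∈ X, ∀ y ∈ Y, HasGradientAt (fun y' => h x y') (gy x y) y)
    (hLip : ∀ x ∈ X, ∀ y ∈ Y, ∀ x' ∈ X, ∀ y' ∈ Y,
      ‖gx x y - gx x' y'‖ ^ 2 + ‖gy x y - gy x' y'‖ ^ 2
        ≤ L ^ 2 * (‖x - x'‖ ^ 2 + ‖y - y'‖ ^ 2))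
    (hconc : ∀ x ∈ X, ConcaveOn ℝ Y (fun y => h x y))
    (ε εh0 : ℝ) (hε : 0 < ε) (hεh0 : 0 < εh0)
    (xh0 : EuclideanSpace ℝ (Fin n)) (hxh0 : xh0 ∈ X)
    (y0 : EuclideanSpace ℝ (Fin m)) (hy0 : y0 ∈ Y)
    (x : ℕ → EuclideanSpace ℝ (Fin n)) (y : ℕ → EuclideanSpace ℝ (Fin m))
    (hx0 : x 0 = xh0)
    (hmem : ∀ k, x k ∈ X ∧ y k ∈ Y)
    -- (x^{k+1}, y^{k+1}) is an ε̂_k-primal-dual stationary point of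
    -- min_x max_y {h_k(x,y)+p(x)−q(y)}, h_k(x,y) = h(x,y) − ε‖y−ŷ⁰‖²/(4D_y) + L‖x−x^k‖²
    (hstat : ∀ k : ℕ, ∃ s t,
      (∀ u ∈ X, p (x (k+1)) + @inner ℝ _ _ s (u - x (k+1)) ≤ p u)
      ∧ (∀ v ∈ Y, q (y (k+1)) + @inner ℝ _ _ t (v - y (k+1)) ≤ q v)
      ∧ ‖gx (x (k+1)) (y (k+1)) + (2 * L) • (x (k+1) - x k) + s‖ ≤ εh0 / (k + 1)
      ∧ ‖gy (x (k+1)) (y (k+1)) - (ε / (2 * Dy)) • (y (k+1) - y0) - t‖ ≤ εh0 / (k + 1)) :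
    ∀ K : ℕ, ∃ k ≤ K, ‖x (k+1) - x k‖ ^ 2
      ≤ (sSup ((fun y' => h xh0 y' + p xh0 - q y') '' Y)
          - sInf ((fun x' => sSup ((fun y' => h x' y' + p x' - q y') '' Y)) '' X)
          + ε * Dy / 4) / (L * (K + 1))
        + 2 * εh0 ^ 2 * (1 + 4 * Dy ^ 2 * L ^ 2 / ε ^ 2) / (L ^ 2 * (K + 1)) := by
  have hDyne : Dy ≠ 0 := ne_of_gt hDy
  have hεne : ε ≠ 0 := ne_of_gt hε
  have hLne : L ≠ 0 := ne_of_gt hL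
  -- lower bounds for `p` on `X` and `q` on `Y` via the subgradients at step 0
  obtain ⟨s0, t0, hs0, ht0, -, -⟩ := hstat 0
  obtain ⟨CX, hCX⟩ := Metric.isBounded_iff.mp hXcp.isBounded
  obtain ⟨CY, hCY⟩ := Metric.isBounded_iff.mp hYcp.isBounded
  have hx1X : x 1 ∈ X := (hmem 1).1
  have hy1Y : y 1 ∈ Y := (hmem 1).2
  have hp_lb : ∀ u ∈ X, p (x 1) - ‖s0‖ * CX ≤ p u := by
    intro u hu
    have h1 := hs0 u hu
    have h2 := abs_real_inner_le_norm s0 (u - x 1)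
    have h3 : ‖u - x 1‖ ≤ CX := by
      have := hCX hu hx1X; rwa [dist_eq_norm] at this
    have h4 : ‖s0‖ * ‖u - x 1‖ ≤ ‖s0‖ * CX :=
      mul_le_mul_of_nonneg_left h3 (norm_nonneg _)
    have h5 := abs_le.mp h2
    linarith [h5.1, h5.2]
  have hq_lb : ∀ v ∈ Y, q (y 1) - ‖t0‖ * CY ≤ q v := by
    intro v hv
    have h1 := ht0 v hv
    have h2 := abs_real_inner_le_norm t0 (v - y 1)
    have h3 : ‖v - y 1‖ ≤ CY := by
      have := hCY hv hy1Y; rwa [dist_eq_norm] at this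
    have h4 : ‖t0‖ * ‖v - y 1‖ ≤ ‖t0‖ * CY :=
      mul_le_mul_of_nonneg_left h3 (norm_nonneg _)
    have h5 := abs_le.mp h2
    linarith [h5.1, h5.2]
  -- continuity of h in each variable
  have hconty : ∀ a ∈ X, ContinuousOn (fun b => h a b) Y := fun a ha b hb =>
    ((hgy a ha b hb).hasFDerivAt.continuousAt).continuousWithinAt
  have hcontx : ∀ b ∈ Y, ContinuousOn (fun a => h a b) X := fun b hb a ha =>
    ((hgx a ha b hb).hasFDerivAt.continuousAt).continuousWithinAt
  have hmax : ∀ a ∈ X, ∃ Mb, ∀ b ∈ Y, h a b ≤ Mb := by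
    intro a ha
    obtain ⟨b0, hb0Y, hb0⟩ := hYcp.exists_isMaxOn hYne (hconty a ha)
    exact ⟨h a b0, fun b hb => hb0 hb⟩
  -- definitions
  set G : EuclideanSpace ℝ (Fin n) → ℝ :=
    fun x' => sSup ((fun y' => h x' y' + p x' - q y') '' Y) with hG
  set φ : EuclideanSpace ℝ (Fin n) → EuclideanSpace ℝ (Fin m) → ℝ :=
    fun a b => h a b + p a - q b - ε / (4 * Dy) * ‖b - y0‖ ^ 2 with hφ
  set Fv : EuclideanSpace ℝ (Fin n) → ℝ := fun a => sSup ((fun b => φ a b) '' Y) with hFv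
  -- boundedness
  have hbddH : ∀ a ∈ X, BddAbove ((fun y' => h a y' + p a - q y') '' Y) := by
    intro a ha
    obtain ⟨Mb, hMb⟩ := hmax a ha
    refine ⟨Mb + p a - (q (y 1) - ‖t0‖ * CY), ?_⟩
    rintro r ⟨b, hb, rfl⟩
    show h a b + p a - q b ≤ Mb + p a - (q (y 1) - ‖t0‖ * CY)
    have h1 := hq_lb b hb
    have h2 := hMb b hb
    linarith
  have hbddF : ∀ a ∈ X, BddAbove ((fun b => φ a b) '' Y) := by
    intro a ha
    obtain ⟨Mb, hMb⟩ := hmax a ha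
    refine ⟨Mb + p a - (q (y 1) - ‖t0‖ * CY), ?_⟩
    rintro r ⟨b, hb, rfl⟩
    have h1 := hq_lb b hb
    have h2 := hMb b hb
    have h3 : 0 ≤ ε / (4 * Dy) * ‖b - y0‖ ^ 2 := by positivity
    simp only [hφ]
    linarith
  have hFleG : ∀ a ∈ X, Fv a ≤ G a := by
    intro a ha
    apply csSup_le (hYne.image _)
    rintro r ⟨b, hb, rfl⟩
    have h3 : 0 ≤ ε / (4 * Dy) * ‖b - y0‖ ^ 2 := by positivity
    have h4 : h a b + p a - q b ≤ G a := le_csSup (hbddH a ha) ⟨b, hb, rfl⟩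
    simp only [hφ]
    linarith
  have hGleF : ∀ a ∈ X, G a ≤ Fv a + ε * Dy / 4 := by
    intro a ha
    apply csSup_le (hYne.image _)
    rintro r ⟨b, hb, rfl⟩
    have h1 : ‖b - y0‖ ≤ Dy := hdY b hb y0 hy0
    have h2 : ‖b - y0‖ ^ 2 ≤ Dy ^ 2 := by nlinarith [norm_nonneg (b - y0)]
    have h3 : ε / (4 * Dy) * ‖b - y0‖ ^ 2 ≤ ε * Dy / 4 := by
      have e : ε / (4 * Dy) * Dy ^ 2 = ε * Dy / 4 := by field_simp
      have := mul_le_mul_of_nonneg_left h2 (le_of_lt (by positivity : (0:ℝ) < ε / (4 * Dy)))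
      linarith
    have h4 : φ a b ≤ Fv a := le_csSup (hbddF a ha) ⟨b, hb, rfl⟩
    simp only [hφ] at h4
    linarith
  have hGlbd : BddBelow (G '' X) := by
    obtain ⟨cM, hcMX, hcM⟩ := hXcp.exists_isMinOn hXne (hcontx y0 hy0)
    refine ⟨h cM y0 + (p (x 1) - ‖s0‖ * CX) - q y0, ?_⟩
    rintro r ⟨a, ha, rfl⟩
    have h1 : h a y0 + p a - q y0 ≤ G a := le_csSup (hbddH a ha) ⟨y0, hy0, rfl⟩
    have h2 : h cM y0 ≤ h a y0 := hcM ha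
    have h3 := hp_lb a ha
    linarith
  -- the per-step inequality
  have key : ∀ k : ℕ, L * ‖x (k+1) - x k‖ ^ 2 ≤ Fv (x k) - Fv (x (k+1)) +
      (εh0 / ((k:ℝ) + 1)) ^ 2 * (1 / (2 * L) + Dy / ε) := by
    intro k
    obtain ⟨s, t, hsub_p, hsub_q, hu, hv⟩ := hstat k
    have haX : x (k+1) ∈ X := (hmem (k+1)).1
    have hbY : y (k+1) ∈ Y := (hmem (k+1)).2
    have hxkX : x k ∈ X := (hmem k).1
    set a := x (k+1) with ha_def
    set b := y (k+1) with hb_def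
    set xk := x k with hxk_def
    set ehat := εh0 / ((k:ℝ) + 1) with hehat
    have hehat_pos : 0 < ehat := by positivity
    -- Lipschitz bound for gx in the first variable
    have hlipx : ∀ z ∈ X, ‖gx z b - gx a b‖ ≤ L * ‖z - a‖ := by
      intro z hz
      have h1 := hLip z hz b hbY a haX b hbY
      have h2 : ‖gx z b - gx a b‖ ^ 2 ≤ L ^ 2 * ‖z - a‖ ^ 2 := by
        have h3 : ‖b - b‖ = 0 := by simp
        rw [h3] at h1
        nlinarith [sq_nonneg ‖gy z b - gy a b‖]
      calc ‖gx z b - gx a b‖ = Real.sqrt (‖gx z b - gx a b‖ ^ 2) :=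
            (Real.sqrt_sq (norm_nonneg _)).symm
        _ ≤ Real.sqrt (L ^ 2 * ‖z - a‖ ^ 2) := Real.sqrt_le_sqrt h2
        _ = L * ‖z - a‖ := by
            rw [← mul_pow, Real.sqrt_sq (by positivity)]
    -- descent inequality in x
    have hdx := descent_lower hXcv (f := fun z => h z b) (g := fun z => gx z b)
      (fun z hz => hgx z hz b hbY) haX hxkX hL.le hlipx
    -- hdx : h a b + ⟪gx a b, xk - a⟫ - L/2 * ‖xk - a‖^2 ≤ h xk b
    have hsubp := hsub_p xk hxkX
    have hiu : ⟪gx a b, xk - a⟫ + ⟪s, xk - a⟫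
        = ⟪gx a b + (2 * L) • (a - xk) + s, xk - a⟫ + 2 * L * ‖a - xk‖ ^ 2 := by
      rw [inner_add_left, inner_add_left, real_inner_smul_left]
      have e1 : ⟪a - xk, xk - a⟫ = -‖a - xk‖ ^ 2 := by
        rw [show xk - a = -(a - xk) by abel, inner_neg_right, real_inner_self_eq_norm_sq]
      rw [e1]; ring
    have hule : -(ehat * ‖a - xk‖) ≤ ⟪gx a b + (2 * L) • (a - xk) + s, xk - a⟫ := by
      have h1 := abs_real_inner_le_norm (gx a b + (2 * L) • (a - xk) + s) (xk - a)
      have h2 : ‖xk - a‖ = ‖a - xk‖ := norm_sub_rev _ _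
      have h3 : ‖gx a b + (2 * L) • (a - xk) + s‖ * ‖xk - a‖ ≤ ehat * ‖a - xk‖ := by
        rw [h2]; exact mul_le_mul_of_nonneg_right hu (norm_nonneg _)
      have h5 := abs_le.mp h1
      linarith [h5.1]
    have hnrev : ‖xk - a‖ = ‖a - xk‖ := norm_sub_rev _ _
    rw [hnrev] at hdx
    have hstep1 : φ a b + (3 * L / 2) * ‖a - xk‖ ^ 2 - ehat * ‖a - xk‖ ≤ φ xk b := by
      simp only [hφ]
      linarith [hdx, hsubp, hiu, hule]
    -- the y-side
    have hstep2 : ∀ w ∈ Y, φ a w ≤ φ a b + ehat * ‖w - b‖ - ε / (4 * Dy) * ‖w - b‖ ^ 2 := by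
      intro w hw
      have hconc' := concave_grad_ineq hYcv (hconc a haX) hbY hw (hgy a haX b hbY)
      have hq' := hsub_q w hw
      have hpen : ‖w - y0‖ ^ 2 = ‖b - y0‖ ^ 2 + 2 * ⟪b - y0, w - b⟫ + ‖w - b‖ ^ 2 := by
        have e : w - y0 = (w - b) + (b - y0) := by abel
        rw [e, norm_add_sq_real, real_inner_comm]; ring
      have hiv : ⟪gy a b - (ε / (2 * Dy)) • (b - y0) - t, w - b⟫
          = ⟪gy a b, w - b⟫ - 2 * (ε / (4 * Dy)) * ⟪b - y0, w - b⟫ - ⟪t, w - b⟫ := by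
        rw [inner_sub_left, inner_sub_left, real_inner_smul_left]
        have e2 : ε / (2 * Dy) = 2 * (ε / (4 * Dy)) := by field_simp; ring
        rw [e2]
      have hvle : ⟪gy a b - (ε / (2 * Dy)) • (b - y0) - t, w - b⟫ ≤ ehat * ‖w - b‖ := by
        have h1 := real_inner_le_norm (gy a b - (ε / (2 * Dy)) • (b - y0) - t) (w - b)
        exact le_trans h1 (mul_le_mul_of_nonneg_right hv (norm_nonneg _))
      have hkey2 : φ a w ≤ φ a b + ⟪gy a b - (ε / (2 * Dy)) • (b - y0) - t, w - b⟫
          - ε / (4 * Dy) * ‖w - b‖ ^ 2 := by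
        simp only [hφ]
        rw [hpen, hiv]
        have e3 : ε / (4 * Dy) * (‖b - y0‖ ^ 2 + 2 * ⟪b - y0, w - b⟫ + ‖w - b‖ ^ 2)
            = ε / (4 * Dy) * ‖b - y0‖ ^ 2 + 2 * (ε / (4 * Dy)) * ⟪b - y0, w - b⟫
              + ε / (4 * Dy) * ‖w - b‖ ^ 2 := by ring
        rw [e3]
        linarith [hconc', hq']
      linarith [hkey2, hvle]
    have hFa : Fv a ≤ φ a b + Dy * ehat ^ 2 / ε := by
      apply csSup_le (hYne.image _)
      rintro r ⟨w, hw, rfl⟩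
      have h1 := hstep2 w hw
      have h2 : ehat * ‖w - b‖ - ε / (4 * Dy) * ‖w - b‖ ^ 2 ≤ Dy * ehat ^ 2 / ε := by
        have hkey3 : Dy * ehat ^ 2 / ε - (ehat * ‖w - b‖ - ε / (4 * Dy) * ‖w - b‖ ^ 2)
            = (ε * ‖w - b‖ - 2 * Dy * ehat) ^ 2 / (4 * Dy * ε) := by
          field_simp; ring
        have h4 := div_nonneg (sq_nonneg (ε * ‖w - b‖ - 2 * Dy * ehat))
          (by positivity : (0:ℝ) ≤ 4 * Dy * ε)
        linarith
      linarith
    have hFxk : φ xk b ≤ Fv xk := le_csSup (hbddF xk hxkX) ⟨b, hbY, rfl⟩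
    have hamgm : ehat * ‖a - xk‖ ≤ L / 2 * ‖a - xk‖ ^ 2 + ehat ^ 2 / (2 * L) := by
      have hkey4 : L / 2 * ‖a - xk‖ ^ 2 + ehat ^ 2 / (2 * L) - ehat * ‖a - xk‖
          = (ehat - L * ‖a - xk‖) ^ 2 / (2 * L) := by
        field_simp; ring
      have h4 := div_nonneg (sq_nonneg (ehat - L * ‖a - xk‖)) (by positivity : (0:ℝ) ≤ 2 * L)
      linarith
    have hexp : ehat ^ 2 * (1 / (2 * L) + Dy / ε) = ehat ^ 2 / (2 * L) + Dy * ehat ^ 2 / ε := by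
      ring
    rw [hexp]
    have c1 : φ a b + L * ‖a - xk‖ ^ 2 - ehat ^ 2 / (2 * L) ≤ φ xk b := by
      nlinarith [hstep1, hamgm]
    clear_value φ Fv a b xk ehat
    linarith [c1, hFxk, hFa]
  -- telescoping sum
  intro K
  have hKpos : (0:ℝ) < (K:ℝ) + 1 := by positivity
  set B : ℝ := 1 / (2 * L) + Dy / ε with hB
  have hBpos : 0 < B := by rw [hB]; positivity
  have hsum1 : ∑ k ∈ Finset.range (K+1), L * ‖x (k+1) - x k‖ ^ 2
      ≤ Fv (x 0) - Fv (x (K+1)) + 2 * εh0 ^ 2 * B := by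
    calc ∑ k ∈ Finset.range (K+1), L * ‖x (k+1) - x k‖ ^ 2
        ≤ ∑ k ∈ Finset.range (K+1),
            ((Fv (x k) - Fv (x (k+1))) + (εh0 / ((k:ℝ) + 1)) ^ 2 * B) :=
          Finset.sum_le_sum (fun k _ => key k)
      _ = (Fv (x 0) - Fv (x (K+1)))
            + ∑ k ∈ Finset.range (K+1), (εh0 / ((k:ℝ) + 1)) ^ 2 * B := by
          rw [Finset.sum_add_distrib, Finset.sum_range_sub' (fun k => Fv (x k))]
      _ ≤ Fv (x 0) - Fv (x (K+1)) + 2 * εh0 ^ 2 * B := by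
          have e1 : ∑ k ∈ Finset.range (K+1), (εh0 / ((k:ℝ) + 1)) ^ 2 * B
              = (∑ k ∈ Finset.range (K+1), (1:ℝ) / ((k:ℝ) + 1) ^ 2) * (εh0 ^ 2 * B) := by
            rw [Finset.sum_mul]
            apply Finset.sum_congr rfl
            intro k _
            rw [div_pow]
            ring
          rw [e1]
          have h2 := inv_sq_sum_le K
          have h3 : (0:ℝ) ≤ εh0 ^ 2 * B := by positivity
          nlinarith [mul_le_mul_of_nonneg_right h2 h3]
  have havg : ∃ k ∈ Finset.range (K+1), L * ‖x (k+1) - x k‖ ^ 2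
      ≤ (Fv (x 0) - Fv (x (K+1)) + 2 * εh0 ^ 2 * B) / ((K:ℝ) + 1) := by
    apply Finset.exists_le_of_sum_le (Finset.nonempty_range_iff.mpr (Nat.succ_ne_zero K))
    rw [Finset.sum_const, Finset.card_range, nsmul_eq_mul]
    push_cast
    rw [mul_div_cancel₀ _ (ne_of_gt hKpos)]
    exact hsum1
  obtain ⟨k, hk, hkle⟩ := havg
  refine ⟨k, Nat.lt_succ_iff.mp (Finset.mem_range.mp hk), ?_⟩
  -- endpoint bounds
  have hF0 : Fv (x 0) ≤ sSup ((fun y' => h xh0 y' + p xh0 - q y') '' Y) := by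
    rw [hx0]
    exact hFleG xh0 hxh0
  have hFK : sInf (G '' X) - ε * Dy / 4 ≤ Fv (x (K+1)) := by
    have h1 : sInf (G '' X) ≤ G (x (K+1)) := csInf_le hGlbd ⟨x (K+1), (hmem (K+1)).1, rfl⟩
    have h2 := hGleF (x (K+1)) (hmem (K+1)).1
    linarith
  have hLK : (0:ℝ) < L * ((K:ℝ) + 1) := by positivity
  have hfin : ‖x (k+1) - x k‖ ^ 2
      ≤ (Fv (x 0) - Fv (x (K+1)) + 2 * εh0 ^ 2 * B) / (L * ((K:ℝ) + 1)) := by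
    rw [le_div_iff₀ hLK]
    rw [le_div_iff₀ hKpos] at hkle
    nlinarith [hkle]
  have hslack : 2 * εh0 ^ 2 * B / (L * ((K:ℝ) + 1))
      ≤ 2 * εh0 ^ 2 * (1 + 4 * Dy ^ 2 * L ^ 2 / ε ^ 2) / (L ^ 2 * ((K:ℝ) + 1)) := by
    rw [div_le_div_iff₀ hLK (by positivity)]
    have hBL : B * L ≤ 1 + 4 * Dy ^ 2 * L ^ 2 / ε ^ 2 := by
      rw [hB]
      have e : (1 / (2 * L) + Dy / ε) * L = 1 / 2 + Dy * L / ε := by field_simp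
      rw [e]
      have e2 : 4 * Dy ^ 2 * L ^ 2 / ε ^ 2 = (2 * (Dy * L / ε)) ^ 2 := by
        field_simp; ring
      rw [e2]
      nlinarith [sq_nonneg (2 * (Dy * L / ε) - 1/4)]
    have h9 : (0:ℝ) ≤ 2 * εh0 ^ 2 * (L * ((K:ℝ) + 1)) := by positivity
    nlinarith [mul_le_mul_of_nonneg_left hBL h9]
  have hnum : (Fv (x 0) - Fv (x (K+1)) + 2 * εh0 ^ 2 * B) / (L * ((K:ℝ) + 1))
      ≤ (sSup ((fun y' => h xh0 y' + p xh0 - q y') '' Y) - sInf (G '' X) + ε * Dy / 4)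
          / (L * ((K:ℝ) + 1))
        + 2 * εh0 ^ 2 * B / (L * ((K:ℝ) + 1)) := by
    rw [← add_div]
    apply (div_le_div_iff_of_pos_right hLK).mpr
    linarith [hF0, hFK]
  calc ‖x (k+1) - x k‖ ^ 2
      ≤ (Fv (x 0) - Fv (x (K+1)) + 2 * εh0 ^ 2 * B) / (L * ((K:ℝ) + 1)) := hfin
    _ ≤ (sSup ((fun y' => h xh0 y' + p xh0 - q y') '' Y) - sInf (G '' X) + ε * Dy / 4)
          / (L * ((K:ℝ) + 1))
        + 2 * εh0 ^ 2 * B / (L * ((K:ℝ) + 1)) := hnum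
    _ ≤ _ := by
        have := hslack
        linarith
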